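/- Let η = η₁ + iη₂ be a complex number with 0 < η₂ < η₁. Then |2·cos(2πη)/(√2·e^(3πi/8)·sin(πη))| ≤ √2·(1 + πη₂)·e^(πη₂)/(πη₂). -/

import Mathlib

theorem stmt_10 (η : ℂ) (h1 : 0 < η.im) (h2 : η.im < η.re) :
    ‖(2 * Complex.cos (2 * Real.pi * η) /
      (Real.sqrt 2 * Complex.exp (3 * Real.pi * Complex.I / 8) * Complex.sin (Real.pi * η)))‖ ≤
    Real.sqrt 2 * (1 + Real.pi * η.im) * Real.exp (Real.pi * η.im) / (Real.pi * η.im) := by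
  have hπ := Real.pi_pos
  set t : ℝ := Real.pi * η.im with ht
  have ht0 : 0 < t := mul_pos hπ h1
  set a : ℝ := Real.exp t with ha
  set b : ℝ := Real.exp (-t) with hb
  have hb0 : 0 < b := Real.exp_pos _
  have ha1 : 1 < a := by rw [ha, ← Real.exp_zero]; exact Real.exp_lt_exp.2 ht0
  have hb1 : b < 1 := by rw [hb, ← Real.exp_zero]; exact Real.exp_lt_exp.2 (by linarith)
  have hab : a * b = 1 := by rw [ha, hb, ← Real.exp_add]; simp
  have h2t : 1 + 2 * t ≤ a * a := by
    have := Real.add_one_le_exp (2 * t)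
    rw [two_mul, Real.exp_add, ← ha] at this; linarith
  have hre1 : (2 * (Real.pi : ℂ) * η * Complex.I).re = -(2 * t) := by
    simp [Complex.mul_re, Complex.mul_im, ht]; ring
  have hre2 : (-(2 * (Real.pi : ℂ) * η) * Complex.I).re = 2 * t := by
    simp [Complex.mul_re, Complex.mul_im, ht]; ring
  have hre3 : (-((Real.pi : ℂ) * η) * Complex.I).re = t := by
    simp [Complex.mul_re, Complex.mul_im, ht]
  have hre4 : ((Real.pi : ℂ) * η * Complex.I).re = -t := by
    simp [Complex.mul_re, Complex.mul_im, ht]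
  have hcos : ‖Complex.cos (2 * Real.pi * η)‖ ≤ (a * a + b * b) / 2 := by
    rw [Complex.cos, norm_div, Complex.norm_two]
    have h := norm_add_le (Complex.exp (2 * Real.pi * η * Complex.I))
      (Complex.exp (-(2 * Real.pi * η) * Complex.I))
    rw [Complex.norm_exp, Complex.norm_exp, hre1, hre2] at h
    have e1 : Real.exp (-(2 * t)) = b * b := by
      rw [hb, ← Real.exp_add]; ring_nf
    have e2 : Real.exp (2 * t) = a * a := by
      rw [ha, ← Real.exp_add]; ring_nf
    rw [e1, e2] at h
    linarith
  have hsin : (a - b) / 2 ≤ ‖Complex.sin (Real.pi * η)‖ := by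
    rw [Complex.sin, norm_div, norm_mul, Complex.norm_I, Complex.norm_two, mul_one]
    have h := norm_sub_norm_le (Complex.exp (-(Real.pi * η) * Complex.I))
      (Complex.exp (Real.pi * η * Complex.I))
    rw [Complex.norm_exp, Complex.norm_exp, hre3, hre4] at h
    rw [← ha, ← hb] at h
    linarith
  have hsinpos : 0 < (a - b) / 2 := by linarith
  have hS0 : (0:ℝ) < Real.sqrt 2 := by positivity
  have hS2 : Real.sqrt 2 * Real.sqrt 2 = 2 := Real.mul_self_sqrt (by norm_num)
  simp only [norm_div, norm_mul, Complex.norm_two, Complex.norm_exp, Complex.norm_real, Real.norm_eq_abs,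
    abs_of_nonneg hS0.le]
  have hre5 : (3 * (Real.pi : ℂ) * Complex.I / 8).re = 0 := by
    simp [Complex.div_re, Complex.mul_re, Complex.mul_im]
  rw [hre5, Real.exp_zero, mul_one]
  calc 2 * ‖Complex.cos (2 * Real.pi * η)‖ /
        (Real.sqrt 2 * ‖Complex.sin (Real.pi * η)‖)
      ≤ 2 * ((a * a + b * b) / 2) / (Real.sqrt 2 * ((a - b) / 2)) := by
        gcongr
    _ ≤ Real.sqrt 2 * (1 + t) * a / t := by
        rw [div_le_div_iff₀ (by positivity) ht0]
        have hexp : Real.sqrt 2 * (1 + t) * a * (Real.sqrt 2 * ((a - b) / 2))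
            = (1 + t) * a * (a - b) := by
          linear_combination ((1 + t) * a * (a - b) / 2) * hS2
        rw [hexp]
        have hbb : b * b ≤ 1 := by nlinarith [mul_pos hb0 hb0]
        have htb : t * (b * b) ≤ t := mul_le_of_le_one_right ht0.le hbb
        have habt : t * (a * b) = t := by rw [hab, mul_one]
        nlinarith [htb, habt, h2t, hab]
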